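/- Let X have density on ℝ^d and Y_k = X + N_k, N_k ~ N(0,σ²I) i.i.d. independent of X. Then for every m ≥ 1, ∇²_{y_m} log p(y_m | y_{1:m−1}) = −σ^{−2}I + σ^{−4}·cov(X | y_{1:m}). -/

import Mathlib

open MeasureTheory Real

noncomputable section

def sqDist {d : ℕ} (x y : Fin d → ℝ) : ℝ := ∑ i, (x i - y i) ^ 2

/-- Density of the isotropic Gaussian `N(x, σ² I)` evaluated at `y`. -/
def gKer (d : ℕ) (σ : ℝ) (x y : Fin d → ℝ) : ℝ :=
  (2 * π * σ ^ 2) ^ (-(d : ℝ) / 2) * Real.exp (-sqDist x y / (2 * σ ^ 2))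

def hess' {d : ℕ} (g : (Fin d → ℝ) → ℝ) (y : Fin d → ℝ) : Matrix (Fin d) (Fin d) ℝ :=
  Matrix.of fun i j => fderiv ℝ (fun z => fderiv ℝ g z (Pi.single j 1)) y (Pi.single i 1)

/-- Joint density of `n` noisy measurements `Y_k = X + N_k`, `N_k ~ N(0, σ²I)`, where `X`
has density `p`. -/
def jointD {d : ℕ} (p : (Fin d → ℝ) → ℝ) (σ : ℝ) (n : ℕ) (y : Fin n → Fin d → ℝ) : ℝ :=
  ∫ x : Fin d → ℝ, p x * ∏ k, gKer d σ x (y k)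

/-- Posterior covariance of `X` given all `n` measurements. -/
def postCovM {d : ℕ} (p : (Fin d → ℝ) → ℝ) (σ : ℝ) (n : ℕ) (y : Fin n → Fin d → ℝ) :
    Matrix (Fin d) (Fin d) ℝ :=
  Matrix.of fun i j =>
    (∫ x, x i * x j * (p x * ∏ k, gKer d σ x (y k))) / jointD p σ n y
      - ((∫ x, x i * (p x * ∏ k, gKer d σ x (y k))) / jointD p σ n y)
          * ((∫ x, x j * (p x * ∏ k, gKer d σ x (y k))) / jointD p σ n y)

section aux
variable {d : ℕ} {σ : ℝ}

/-- the linear functional `v ↦ ∑ j, a j * v j` -/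
def lin (a : Fin d → ℝ) : (Fin d → ℝ) →L[ℝ] ℝ :=
  ∑ j, a j • (ContinuousLinearMap.proj j : (Fin d → ℝ) →L[ℝ] ℝ)

lemma lin_apply (a v : Fin d → ℝ) : lin a v = ∑ j, a j * v j := by
  simp [lin]

lemma lin_single (a : Fin d → ℝ) (i : Fin d) : lin a (Pi.single i 1) = a i := by
  rw [lin_apply]
  rw [Finset.sum_eq_single i]
  · simp
  · intro j _ hj; simp [Pi.single_apply, hj]
  · simp

lemma lin_norm_le (a : Fin d → ℝ) : ‖lin a‖ ≤ ∑ j, |a j| := by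
  apply ContinuousLinearMap.opNorm_le_bound _ (by positivity)
  intro v
  rw [lin_apply]
  calc ‖∑ j, a j * v j‖ ≤ ∑ j, ‖a j * v j‖ := norm_sum_le _ _
    _ ≤ ∑ j, |a j| * ‖v‖ := by
        apply Finset.sum_le_sum
        intro j _
        rw [norm_mul]
        rw [Real.norm_eq_abs]
        exact mul_le_mul_of_nonneg_left (norm_le_pi_norm v j) (abs_nonneg _)
    _ = (∑ j, |a j|) * ‖v‖ := by rw [Finset.sum_mul]

lemma gKer_pos (hσ : 0 < σ) (x z : Fin d → ℝ) : 0 < gKer d σ x z := by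
  unfold gKer
  positivity

lemma gKer_le (x z : Fin d → ℝ) : gKer d σ x z ≤ (2 * π * σ ^ 2) ^ (-(d : ℝ) / 2) := by
  unfold gKer
  have h1 : Real.exp (-sqDist x z / (2 * σ ^ 2)) ≤ 1 := by
    apply Real.exp_le_one_iff.mpr
    have : 0 ≤ sqDist x z := by unfold sqDist; positivity
    rcases eq_or_ne σ 0 with h | h
    · simp [h]
    · have : 0 < 2 * σ ^ 2 := by positivity
      apply div_nonpos_of_nonpos_of_nonneg <;> nlinarith
  nlinarith [Real.rpow_nonneg (by positivity : (0:ℝ) ≤ 2 * π * σ ^ 2) (-(d:ℝ)/2),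
    Real.exp_pos (-sqDist x z / (2 * σ ^ 2))]

lemma continuous_gKer_x (z : Fin d → ℝ) : Continuous fun x => gKer d σ x z := by
  unfold gKer sqDist
  fun_prop


section deriv
variable {d : ℕ} {σ : ℝ}

lemma hasFDerivAt_sqDist (x z₀ : Fin d → ℝ) :
    HasFDerivAt (fun z => sqDist x z) (lin (fun i => -2 * (x i - z₀ i))) z₀ := by
  have h1 : ∀ i : Fin d, HasFDerivAt (fun z : Fin d → ℝ => (x i - z i)^2)
      ((-2 * (x i - z₀ i)) • (ContinuousLinearMap.proj i : (Fin d → ℝ) →L[ℝ] ℝ)) z₀ := by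
    intro i
    have h2 : HasFDerivAt (fun z : Fin d → ℝ => x i - z i)
        (-(ContinuousLinearMap.proj i : (Fin d → ℝ) →L[ℝ] ℝ)) z₀ :=
      (hasFDerivAt_apply i z₀).const_sub (x i)
    have h3 := h2.mul h2
    have hsq : (fun z : Fin d → ℝ => (x i - z i)^2) = fun z => (x i - z i) * (x i - z i) := by
      funext z; ring
    rw [hsq]
    refine h3.congr_fderiv ?_
    ext v
    simp
    ring
  have h4 := HasFDerivAt.fun_sum (fun i (_ : i ∈ Finset.univ) => h1 i)
  have h5 : (fun z => sqDist x z) = fun z => ∑ i, (x i - z i)^2 := by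
    funext z; rfl
  rw [h5]
  exact h4

lemma hasFDerivAt_gKer (hσ : σ ≠ 0) (x z₀ : Fin d → ℝ) :
    HasFDerivAt (fun z => gKer d σ x z)
      (((σ^2)⁻¹ * gKer d σ x z₀) • lin (fun i => x i - z₀ i)) z₀ := by
  have hu : HasFDerivAt (fun z => -sqDist x z / (2*σ^2))
      ((2*σ^2)⁻¹ • (-(lin (fun i => -2 * (x i - z₀ i))))) z₀ := by
    have h0 := ((hasFDerivAt_sqDist x z₀).neg).const_mul ((2*σ^2)⁻¹)
    have he : (fun z => -sqDist x z / (2*σ^2)) = fun z => (2*σ^2)⁻¹ * (-sqDist x z) := by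
      funext z; rw [div_eq_inv_mul]
    rw [he]
    exact h0
  have hexp := hu.exp
  have h6 := hexp.const_mul ((2*π*σ^2) ^ (-(d:ℝ)/2))
  have h7 : (fun z => gKer d σ x z)
      = fun z => (2*π*σ^2) ^ (-(d:ℝ)/2) * Real.exp (-sqDist x z / (2*σ^2)) := by
    funext z; rfl
  rw [h7]
  refine h6.congr_fderiv ?_
  ext v
  simp [lin_apply, gKer, Finset.mul_sum]
  apply Finset.sum_congr rfl
  intro i _
  field_simp
end deriv

section dom
variable {d : ℕ} {σ : ℝ}


/-- shifted center for a sign pattern `S` -/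
def sgnC (z₀ : Fin d → ℝ) (ε : ℝ) (S : Finset (Fin d)) : Fin d → ℝ :=
  fun i => z₀ i + (if i ∈ S then ε else -ε)

lemma gKer_ball_le (hσ : 0 < σ) (x z₀ : Fin d → ℝ) {ε : ℝ} (hε : 0 < ε) {z : Fin d → ℝ}
    (hz : z ∈ Metric.ball z₀ ε) :
    gKer d σ x z ≤ Real.exp (d * ε^2 / (2*σ^2)) *
      ∑ S : Finset (Fin d), gKer d σ x (sgnC z₀ ε S) := by
  have hσ2 : (0:ℝ) < 2*σ^2 := by positivity
  have hb : ∀ i, |z i - z₀ i| ≤ ε := by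
    intro i
    have h1 : dist (z i) (z₀ i) ≤ dist z z₀ := dist_le_pi_dist z z₀ i
    have h2 : dist z z₀ < ε := Metric.mem_ball.mp hz
    rw [Real.dist_eq] at h1
    linarith
  have key1 : -sqDist x z / (2*σ^2) ≤ ∑ i, (-((x i - z₀ i))^2/(2*σ^2) + ε * |(x i - z₀ i)| / σ^2) := by
    have h0 : -sqDist x z / (2*σ^2) = ∑ i, -((x i - z i)^2)/(2*σ^2) := by
      unfold sqDist
      rw [neg_div, Finset.sum_div, ← Finset.sum_neg_distrib]
      simp [neg_div]
    rw [h0]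
    apply Finset.sum_le_sum
    intro i _
    have hab : (x i - z₀ i) * (z i - z₀ i) ≤ |(x i - z₀ i)| * ε := by
      calc (x i - z₀ i) * (z i - z₀ i) ≤ |(x i - z₀ i) * (z i - z₀ i)| := le_abs_self _
        _ = |(x i - z₀ i)| * |z i - z₀ i| := by rw [abs_mul]
        _ ≤ |(x i - z₀ i)| * ε := mul_le_mul_of_nonneg_left (hb i) (abs_nonneg _)
    have hnum : -((x i - z i)^2) ≤ -((x i - z₀ i))^2 + 2*(ε*|(x i - z₀ i)|) := by
      have hz2 : (0:ℝ) ≤ (z i - z₀ i)^2 := sq_nonneg _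
      nlinarith [hab, hz2]
    calc -((x i - z i)^2)/(2*σ^2) ≤ (-((x i - z₀ i))^2 + 2*(ε*|(x i - z₀ i)|))/(2*σ^2) := by gcongr
      _ = -((x i - z₀ i))^2/(2*σ^2) + ε * |(x i - z₀ i)| / σ^2 := by field_simp
  have key2 : Real.exp (∑ i, (-((x i - z₀ i))^2/(2*σ^2) + ε * |(x i - z₀ i)| / σ^2))
      ≤ ∑ S : Finset (Fin d),
          Real.exp (∑ i, (-((x i - z₀ i))^2/(2*σ^2) + (if i ∈ S then ε else -ε) * (x i - z₀ i) / σ^2)) := by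
    rw [Real.exp_sum]
    have hterm : ∀ i : Fin d, Real.exp (-((x i - z₀ i))^2/(2*σ^2) + ε * |(x i - z₀ i)| / σ^2)
        ≤ Real.exp (-((x i - z₀ i))^2/(2*σ^2) + ε * (x i - z₀ i) / σ^2)
          + Real.exp (-((x i - z₀ i))^2/(2*σ^2) + (-ε) * (x i - z₀ i) / σ^2) := by
      intro i
      rcases abs_cases ((x i - z₀ i)) with ⟨h1, _⟩ | ⟨h1, _⟩
      · rw [h1]
        nlinarith [Real.exp_pos (-((x i - z₀ i))^2/(2*σ^2) + (-ε) * (x i - z₀ i) / σ^2)]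
      · rw [h1]
        have : ε * -(x i - z₀ i) / σ^2 = (-ε) * (x i - z₀ i) / σ^2 := by ring
        rw [this]
        nlinarith [Real.exp_pos (-((x i - z₀ i))^2/(2*σ^2) + ε * (x i - z₀ i) / σ^2)]
    calc ∏ i, Real.exp (-((x i - z₀ i))^2/(2*σ^2) + ε * |(x i - z₀ i)| / σ^2)
        ≤ ∏ i, (Real.exp (-((x i - z₀ i))^2/(2*σ^2) + ε * (x i - z₀ i) / σ^2)
            + Real.exp (-((x i - z₀ i))^2/(2*σ^2) + (-ε) * (x i - z₀ i) / σ^2)) := by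
          apply Finset.prod_le_prod
          · intro i _; positivity
          · intro i _; exact hterm i
      _ = ∑ S ∈ (Finset.univ : Finset (Fin d)).powerset,
            (∏ i ∈ S, Real.exp (-((x i - z₀ i))^2/(2*σ^2) + ε * (x i - z₀ i) / σ^2)) *
            ∏ i ∈ Finset.univ \ S, Real.exp (-((x i - z₀ i))^2/(2*σ^2) + (-ε) * (x i - z₀ i) / σ^2) :=
          Finset.prod_add _ _ _
      _ = ∑ S : Finset (Fin d),
            Real.exp (∑ i, (-((x i - z₀ i))^2/(2*σ^2) + (if i ∈ S then ε else -ε) * (x i - z₀ i) / σ^2)) := by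
          rw [Finset.powerset_univ]
          apply Finset.sum_congr rfl
          intro S _
          rw [← Real.exp_sum, ← Real.exp_sum, ← Real.exp_add]
          congr 1
          have hp := Finset.sum_piecewise Finset.univ S
            (fun i => -((x i - z₀ i))^2/(2*σ^2) + ε * (x i - z₀ i) / σ^2)
            (fun i => -((x i - z₀ i))^2/(2*σ^2) + (-ε) * (x i - z₀ i) / σ^2)
          rw [Finset.univ_inter] at hp
          rw [← hp]
          apply Finset.sum_congr rfl
          intro i _
          by_cases hi : i ∈ S
          · rw [Finset.piecewise_eq_of_mem _ _ _ hi, if_pos hi]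
          · rw [Finset.piecewise_eq_of_notMem _ _ _ hi, if_neg hi]
  have key3 : ∀ S : Finset (Fin d),
      ∑ i, (-((x i - z₀ i))^2/(2*σ^2) + (if i ∈ S then ε else -ε) * (x i - z₀ i) / σ^2)
      = -sqDist x (sgnC z₀ ε S) / (2*σ^2) + d*ε^2/(2*σ^2) := by
    intro S
    unfold sqDist sgnC
    rw [neg_div, Finset.sum_div, ← Finset.sum_neg_distrib]
    have hd : (d:ℝ)*ε^2/(2*σ^2) = ∑ _i : Fin d, ε^2/(2*σ^2) := by
      rw [Finset.sum_const]
      simp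
      ring
    rw [hd, ← Finset.sum_add_distrib]
    apply Finset.sum_congr rfl
    intro i _
    have hveq : x i - (z₀ i + (if i ∈ S then ε else -ε)) = (x i - z₀ i) - (if i ∈ S then ε else -ε) := by
      ring
    rw [hveq]
    split_ifs with h
    · field_simp
      ring
    · field_simp
      ring
  calc gKer d σ x z
      = (2*π*σ^2) ^ (-(d:ℝ)/2) * Real.exp (-sqDist x z / (2*σ^2)) := rfl
    _ ≤ (2*π*σ^2) ^ (-(d:ℝ)/2) * Real.exp (∑ i, (-((x i - z₀ i))^2/(2*σ^2) + ε * |(x i - z₀ i)| / σ^2)) :=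
        mul_le_mul_of_nonneg_left (Real.exp_le_exp.mpr key1) (by positivity)
    _ ≤ (2*π*σ^2) ^ (-(d:ℝ)/2) * ∑ S : Finset (Fin d),
          Real.exp (∑ i, (-((x i - z₀ i))^2/(2*σ^2) + (if i ∈ S then ε else -ε) * (x i - z₀ i) / σ^2)) :=
        mul_le_mul_of_nonneg_left key2 (by positivity)
    _ = Real.exp (d * ε^2 / (2*σ^2)) * ∑ S : Finset (Fin d), gKer d σ x (sgnC z₀ ε S) := by
        rw [Finset.mul_sum, Finset.mul_sum]
        apply Finset.sum_congr rfl
        intro S _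
        rw [key3 S, Real.exp_add]
        unfold gKer
        ring

end dom

section key
variable {d : ℕ} {σ : ℝ}

lemma continuous_lin_shift (z₀ : Fin d → ℝ) :
    Continuous (fun x : Fin d → ℝ => lin (fun i => x i - z₀ i)) := by
  unfold lin
  apply continuous_finset_sum
  intro j _
  exact (((continuous_apply j).sub continuous_const).smul continuous_const)

lemma gKer_nonneg (hσ : 0 < σ) (x z : Fin d → ℝ) : 0 ≤ gKer d σ x z :=
  (gKer_pos hσ x z).le

/-- integrability of `|φ| gKer (∑ (|x j| + b j))` -/
lemma int_weight (hσ : 0 < σ) {φ : (Fin d → ℝ) → ℝ}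
    (hint : ∀ c : Fin d → ℝ, Integrable (fun x => |φ x| * gKer d σ x c))
    (hint1 : ∀ (c : Fin d → ℝ) (i : Fin d),
      Integrable (fun x => |φ x| * gKer d σ x c * |x i|))
    (c : Fin d → ℝ) (b : Fin d → ℝ) :
    Integrable (fun x => |φ x| * gKer d σ x c * (∑ j, (|x j| + b j))) := by
  have h1 : (fun x => |φ x| * gKer d σ x c * (∑ j, (|x j| + b j)))
      = fun x => ∑ j, (|φ x| * gKer d σ x c * |x j| + (|φ x| * gKer d σ x c) * b j) := by
    funext x
    rw [Finset.mul_sum]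
    apply Finset.sum_congr rfl
    intro j _
    ring
  rw [h1]
  apply integrable_finset_sum
  intro j _
  exact (hint1 c j).add ((hint c).mul_const (b j))

lemma F'_norm_le (hσ : 0 < σ) (φ : (Fin d → ℝ) → ℝ) (x z : Fin d → ℝ) :
    ‖((σ^2)⁻¹ * (φ x * gKer d σ x z)) • lin (fun i => x i - z i)‖
      ≤ (σ^2)⁻¹ * (|φ x| * gKer d σ x z) * ∑ j, |x j - z j| := by
  have h2 : |(σ^2)⁻¹ * (φ x * gKer d σ x z)| = (σ^2)⁻¹ * (|φ x| * gKer d σ x z) := by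
    rw [abs_mul, abs_mul]
    rw [abs_of_nonneg (by positivity : (0:ℝ) ≤ (σ^2)⁻¹),
      abs_of_nonneg (gKer_nonneg hσ x z)]
  have hnn : (0:ℝ) ≤ (σ^2)⁻¹ * (|φ x| * gKer d σ x z) :=
    mul_nonneg (by positivity) (mul_nonneg (abs_nonneg _) (gKer_nonneg hσ x z))
  apply ContinuousLinearMap.opNorm_le_bound _
    (mul_nonneg hnn (Finset.sum_nonneg fun j _ => abs_nonneg _))
  intro w
  rw [ContinuousLinearMap.smul_apply, smul_eq_mul, norm_mul, Real.norm_eq_abs, h2]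
  calc (σ^2)⁻¹ * (|φ x| * gKer d σ x z) * ‖(lin fun i => x i - z i) w‖
      ≤ (σ^2)⁻¹ * (|φ x| * gKer d σ x z) * (‖lin fun i => x i - z i‖ * ‖w‖) := by
        apply mul_le_mul_of_nonneg_left _ hnn
        exact ContinuousLinearMap.le_opNorm _ _
    _ ≤ (σ^2)⁻¹ * (|φ x| * gKer d σ x z) * ((∑ j, |x j - z j|) * ‖w‖) := by
        apply mul_le_mul_of_nonneg_left _ hnn
        apply mul_le_mul_of_nonneg_right (lin_norm_le _) (norm_nonneg _)
    _ = (σ^2)⁻¹ * (|φ x| * gKer d σ x z) * (∑ j, |x j - z j|) * ‖w‖ := by ring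

lemma keyDeriv_integrable (hσ : 0 < σ) (φ : (Fin d → ℝ) → ℝ)
    (hmeas : AEStronglyMeasurable φ (volume : Measure (Fin d → ℝ)))
    (hint : ∀ c : Fin d → ℝ, Integrable (fun x => |φ x| * gKer d σ x c))
    (hint1 : ∀ (c : Fin d → ℝ) (i : Fin d),
      Integrable (fun x => |φ x| * gKer d σ x c * |x i|))
    (z₀ : Fin d → ℝ) :
    Integrable (fun x => ((σ^2)⁻¹ * (φ x * gKer d σ x z₀)) • lin (fun i => x i - z₀ i)) := by
  have hb := (int_weight hσ hint hint1 z₀ (fun j => |z₀ j|)).const_mul ((σ^2)⁻¹)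
  apply Integrable.mono' hb
  · apply AEStronglyMeasurable.fun_smul
    · exact ((hmeas.mul (continuous_gKer_x z₀).aestronglyMeasurable).const_mul _)
    · exact (continuous_lin_shift z₀).aestronglyMeasurable
  · filter_upwards with x
    refine (F'_norm_le hσ φ x z₀).trans ?_
    calc (σ^2)⁻¹ * (|φ x| * gKer d σ x z₀) * ∑ j, |x j - z₀ j|
        ≤ (σ^2)⁻¹ * (|φ x| * gKer d σ x z₀) * ∑ j, (|x j| + |z₀ j|) := by
          apply mul_le_mul_of_nonneg_left _
            (mul_nonneg (by positivity) (mul_nonneg (abs_nonneg _) (gKer_nonneg hσ x z₀)))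
          exact Finset.sum_le_sum (fun j _ => abs_sub _ _)
      _ = (σ^2)⁻¹ * (|φ x| * gKer d σ x z₀ * ∑ j, (|x j| + |z₀ j|)) := by ring

lemma keyDeriv (hσ : 0 < σ) (φ : (Fin d → ℝ) → ℝ)
    (hmeas : AEStronglyMeasurable φ (volume : Measure (Fin d → ℝ)))
    (hint : ∀ c : Fin d → ℝ, Integrable (fun x => |φ x| * gKer d σ x c))
    (hint1 : ∀ (c : Fin d → ℝ) (i : Fin d),
      Integrable (fun x => |φ x| * gKer d σ x c * |x i|))
    (z₀ : Fin d → ℝ) :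
    HasFDerivAt (fun z => ∫ x, φ x * gKer d σ x z)
      (∫ x, ((σ^2)⁻¹ * (φ x * gKer d σ x z₀)) • lin (fun i => x i - z₀ i)) z₀ := by
  set C : ℝ := Real.exp (d * 1^2 / (2*σ^2)) with hC
  have hC0 : 0 < C := Real.exp_pos _
  set bound : (Fin d → ℝ) → ℝ := fun x =>
    (σ^2)⁻¹ * C * ∑ S : Finset (Fin d),
      (|φ x| * gKer d σ x (sgnC z₀ 1 S) * ∑ j, (|x j| + (|z₀ j| + 1))) with hbd
  apply hasFDerivAt_integral_of_dominated_of_fderiv_le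
    (F' := fun z x => ((σ^2)⁻¹ * (φ x * gKer d σ x z)) • lin (fun i => x i - z i))
    (bound := bound) (s := Metric.ball z₀ 1) (Metric.ball_mem_nhds z₀ one_pos)
  · filter_upwards with z
    exact hmeas.mul (continuous_gKer_x z).aestronglyMeasurable
  · apply Integrable.mono' (hint z₀)
    · exact hmeas.mul (continuous_gKer_x z₀).aestronglyMeasurable
    · filter_upwards with x
      rw [Real.norm_eq_abs, abs_mul, abs_of_nonneg (gKer_nonneg hσ x z₀)]
  · apply AEStronglyMeasurable.fun_smul
    · exact ((hmeas.mul (continuous_gKer_x z₀).aestronglyMeasurable).const_mul _)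
    · exact (continuous_lin_shift z₀).aestronglyMeasurable
  · filter_upwards with x
    intro z hz
    refine (F'_norm_le hσ φ x z).trans ?_
    rw [hbd]
    have h1 : ∑ j, |x j - z j| ≤ ∑ j, (|x j| + (|z₀ j| + 1)) := by
      apply Finset.sum_le_sum
      intro j _
      have h2 : |x j - z j| ≤ |x j| + |z j| := abs_sub _ _
      have h3 : |z j| ≤ |z₀ j| + 1 := by
        have h4 : |z j - z₀ j| ≤ 1 := by
          have h5 : dist (z j) (z₀ j) ≤ dist z z₀ := dist_le_pi_dist z z₀ j
          have h6 : dist z z₀ < 1 := Metric.mem_ball.mp hz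
          rw [Real.dist_eq] at h5
          linarith
        have := abs_sub_abs_le_abs_sub (z j) (z₀ j)
        linarith
      linarith
    have h7 : gKer d σ x z ≤ C * ∑ S : Finset (Fin d), gKer d σ x (sgnC z₀ 1 S) :=
      gKer_ball_le hσ x z₀ one_pos hz
    calc (σ^2)⁻¹ * (|φ x| * gKer d σ x z) * ∑ j, |x j - z j|
        ≤ (σ^2)⁻¹ * (|φ x| * gKer d σ x z) * ∑ j, (|x j| + (|z₀ j| + 1)) := by
          apply mul_le_mul_of_nonneg_left h1
            (mul_nonneg (by positivity) (mul_nonneg (abs_nonneg _) (gKer_nonneg hσ x z)))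
      _ ≤ (σ^2)⁻¹ * (|φ x| * (C * ∑ S : Finset (Fin d), gKer d σ x (sgnC z₀ 1 S)))
            * ∑ j, (|x j| + (|z₀ j| + 1)) := by
          have h8 : (0:ℝ) ≤ ∑ j, (|x j| + (|z₀ j| + 1)) := by
            apply Finset.sum_nonneg
            intro j _
            have := abs_nonneg (x j); have := abs_nonneg (z₀ j); linarith
          apply mul_le_mul_of_nonneg_right _ h8
          apply mul_le_mul_of_nonneg_left _ (by positivity)
          exact mul_le_mul_of_nonneg_left h7 (abs_nonneg _)
      _ = (σ^2)⁻¹ * C * ∑ S : Finset (Fin d),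
            (|φ x| * gKer d σ x (sgnC z₀ 1 S) * ∑ j, (|x j| + (|z₀ j| + 1))) := by
          simp only [Finset.mul_sum, Finset.sum_mul]
          rw [Finset.sum_comm]
          apply Finset.sum_congr rfl
          intro S _
          apply Finset.sum_congr rfl
          intro j _
          ring
  · rw [hbd]
    apply Integrable.const_mul
    apply integrable_finset_sum
    intro S _
    exact int_weight hσ hint hint1 (sgnC z₀ 1 S) (fun j => |z₀ j| + 1)
  · filter_upwards with x
    intro z hz
    have h9 := (hasFDerivAt_gKer hσ.ne' x z).const_mul (φ x)
    refine h9.congr_fderiv ?_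
    rw [smul_smul]
    congr 1
    ring

lemma keyDeriv_eval (hσ : 0 < σ) (φ : (Fin d → ℝ) → ℝ)
    (hmeas : AEStronglyMeasurable φ (volume : Measure (Fin d → ℝ)))
    (hint : ∀ c : Fin d → ℝ, Integrable (fun x => |φ x| * gKer d σ x c))
    (hint1 : ∀ (c : Fin d → ℝ) (i : Fin d),
      Integrable (fun x => |φ x| * gKer d σ x c * |x i|))
    (z₀ : Fin d → ℝ) (i : Fin d) :
    (∫ x, ((σ^2)⁻¹ * (φ x * gKer d σ x z₀)) • lin (fun i => x i - z₀ i)) (Pi.single i 1)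
      = (σ^2)⁻¹ * ∫ x, φ x * gKer d σ x z₀ * (x i - z₀ i) := by
  rw [ContinuousLinearMap.integral_apply (keyDeriv_integrable hσ φ hmeas hint hint1 z₀)]
  have h1 : (fun x => (((σ^2)⁻¹ * (φ x * gKer d σ x z₀)) • lin (fun i => x i - z₀ i))
        (Pi.single i 1))
      = fun x => (σ^2)⁻¹ * (φ x * gKer d σ x z₀ * (x i - z₀ i)) := by
    funext x
    rw [ContinuousLinearMap.smul_apply, smul_eq_mul, lin_single]
    ring
  rw [h1, MeasureTheory.integral_const_mul]

end key

section app
variable {d m : ℕ} {σ : ℝ}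

lemma prod_update_eq (y : Fin (m+1) → Fin d → ℝ) (z x : Fin d → ℝ) :
    ∏ k : Fin (m+1), gKer d σ x (Function.update y (Fin.last m) z k)
      = (∏ k : Fin m, gKer d σ x (y k.castSucc)) * gKer d σ x z := by
  rw [Fin.prod_univ_castSucc]
  congr 1
  · apply Finset.prod_congr rfl
    intro k _
    rw [Function.update_of_ne (Fin.castSucc_lt_last k).ne]
  · rw [Function.update_self]

lemma prod_self_eq (y : Fin (m+1) → Fin d → ℝ) (x : Fin d → ℝ) :
    ∏ k : Fin (m+1), gKer d σ x (y k)
      = (∏ k : Fin m, gKer d σ x (y k.castSucc)) * gKer d σ x (y (Fin.last m)) :=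
  Fin.prod_univ_castSucc _

end app
end aux

/-- For every `m ≥ 1` (here `m + 1` measurements),
`∇²_{y_m} log p(y_m | y_{1:m−1}) = −σ⁻²I + σ⁻⁴ cov(X | y_{1:m})`. -/
theorem stmt10 (d m : ℕ) (σ : ℝ) (hσ : 0 < σ) (p : (Fin d → ℝ) → ℝ)
    (hp0 : ∀ x, 0 ≤ p x) (hpi : Integrable p) (hp1 : ∫ x, p x = 1)
    (hpos : ∀ (n : ℕ) (y : Fin n → Fin d → ℝ), 0 < jointD p σ n y)
    (hmom2 : ∀ (n : ℕ) (y : Fin n → Fin d → ℝ) (i j : Fin d),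
      Integrable fun x => x i * x j * (p x * ∏ k, gKer d σ x (y k)))
    (y : Fin (m + 1) → Fin d → ℝ) :
    hess' (fun z =>
        Real.log (jointD p σ (m + 1) (Function.update y (Fin.last m) z)
          / jointD p σ m (fun k => y k.castSucc)))
      (y (Fin.last m))
      = -((σ ^ 2)⁻¹ • (1 : Matrix (Fin d) (Fin d) ℝ))
          + (σ ^ 4)⁻¹ • postCovM p σ (m + 1) y := by
  have hσ2 : (σ:ℝ) ≠ 0 := hσ.ne'
  set z₀ := y (Fin.last m) with hz₀def
  set Q : (Fin d → ℝ) → ℝ := fun x => p x * ∏ k : Fin m, gKer d σ x (y k.castSucc) with hQdef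
  set C : ℝ := jointD p σ m (fun k => y k.castSucc) with hCdef
  set J : (Fin d → ℝ) → ℝ := fun z => ∫ x, Q x * gKer d σ x z with hJdef
  -- basic facts about Q
  have hQmeas : AEStronglyMeasurable Q (volume : Measure (Fin d → ℝ)) := by
    apply hpi.aestronglyMeasurable.mul
    apply Continuous.aestronglyMeasurable
    apply continuous_finset_prod
    intro k _
    exact continuous_gKer_x _
  have hQ0 : ∀ x, 0 ≤ Q x := fun x =>
    mul_nonneg (hp0 x) (Finset.prod_nonneg fun k _ => gKer_nonneg hσ _ _)
  have hQg : ∀ (c : Fin d → ℝ) (x), p x * ∏ k : Fin (m+1),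
      gKer d σ x (Function.update y (Fin.last m) c k) = Q x * gKer d σ x c := by
    intro c x
    rw [prod_update_eq, hQdef, mul_assoc]
  have hupd : ∀ z, jointD p σ (m+1) (Function.update y (Fin.last m) z) = J z := by
    intro z
    unfold jointD
    simp only [hQg z]
    rfl
  have hJpos : ∀ z, 0 < J z := fun z => by rw [← hupd z]; exact hpos (m+1) _
  have hCpos : 0 < C := hpos m _
  -- integrability
  have hmomQ : ∀ (c : Fin d → ℝ) (i j : Fin d),
      Integrable (fun x => x i * x j * (Q x * gKer d σ x c)) := by
    intro c i j
    have h := hmom2 (m+1) (Function.update y (Fin.last m) c) i j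
    apply h.congr
    filter_upwards with x
    rw [hQg c x]
  have hintQ : ∀ c : Fin d → ℝ, Integrable (fun x => |Q x| * gKer d σ x c) := by
    intro c
    set c0 : ℝ := (2*π*σ^2) ^ (-(d:ℝ)/2) with hc0
    have hc0p : 0 < c0 := by rw [hc0]; positivity
    apply Integrable.mono' (hpi.const_mul (c0^(m+1)))
    · exact (hQmeas.norm.mul (continuous_gKer_x c).aestronglyMeasurable)
    · filter_upwards with x
      rw [Real.norm_eq_abs, abs_mul, abs_abs, abs_of_nonneg (gKer_nonneg hσ x c),
        abs_of_nonneg (hQ0 x)]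
      have h1 : (∏ k : Fin m, gKer d σ x (y k.castSucc)) * gKer d σ x c ≤ c0^m * c0 := by
        apply mul_le_mul _ (gKer_le x c) (gKer_nonneg hσ x c) (by positivity)
        calc ∏ k : Fin m, gKer d σ x (y k.castSucc) ≤ ∏ _k : Fin m, c0 := by
              apply Finset.prod_le_prod
              · intro k _; exact gKer_nonneg hσ _ _
              · intro k _; exact gKer_le _ _
          _ = c0^m := by rw [Finset.prod_const, Finset.card_univ, Fintype.card_fin]
      calc Q x * gKer d σ x c
          = p x * ((∏ k : Fin m, gKer d σ x (y k.castSucc)) * gKer d σ x c) := by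
            rw [hQdef]; ring
        _ ≤ p x * (c0^m * c0) := mul_le_mul_of_nonneg_left h1 (hp0 x)
        _ = c0^(m+1) * p x := by rw [pow_succ]; ring
  have hintQ1 : ∀ (c : Fin d → ℝ) (i : Fin d),
      Integrable (fun x => |Q x| * gKer d σ x c * |x i|) := by
    intro c i
    apply Integrable.mono' ((hintQ c).add (hmomQ c i i))
    · exact ((hQmeas.norm.mul (continuous_gKer_x c).aestronglyMeasurable).mul
        ((continuous_apply i).abs.aestronglyMeasurable))
    · filter_upwards with x
      rw [Real.norm_eq_abs, abs_mul, abs_mul, abs_abs, abs_abs,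
        abs_of_nonneg (gKer_nonneg hσ x c)]
      have h2 : |x i| ≤ 1 + x i * x i := by
        rcases abs_cases (x i) with ⟨h,_⟩ | ⟨h,_⟩ <;> nlinarith [abs_nonneg (x i)]
      have hnn : 0 ≤ |Q x| * gKer d σ x c :=
        mul_nonneg (abs_nonneg _) (gKer_nonneg hσ x c)
      calc |Q x| * gKer d σ x c * |x i|
          ≤ |Q x| * gKer d σ x c * (1 + x i * x i) := mul_le_mul_of_nonneg_left h2 hnn
        _ = |Q x| * gKer d σ x c + x i * x i * (|Q x| * gKer d σ x c) := by ring
        _ = |Q x| * gKer d σ x c + x i * x i * (Q x * gKer d σ x c) := by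
            rw [abs_of_nonneg (hQ0 x)]
  -- φ₁ j := x j * Q x
  have hmeas1 : ∀ j : Fin d, AEStronglyMeasurable (fun x : Fin d → ℝ => x j * Q x)
      (volume : Measure (Fin d → ℝ)) :=
    fun j => (continuous_apply j).aestronglyMeasurable.mul hQmeas
  have hint_1 : ∀ (j : Fin d) (c : Fin d → ℝ),
      Integrable (fun x => |x j * Q x| * gKer d σ x c) := by
    intro j c
    apply (hintQ1 c j).congr
    filter_upwards with x
    have e1 : |x j * Q x| = |x j| * Q x := by
      rw [abs_mul, abs_of_nonneg (hQ0 x)]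
    rw [e1, abs_of_nonneg (hQ0 x)]
    ring
  have hint1_1 : ∀ (j : Fin d) (c : Fin d → ℝ) (i : Fin d),
      Integrable (fun x => |x j * Q x| * gKer d σ x c * |x i|) := by
    intro j c i
    apply ((hmomQ c i j).abs).congr
    filter_upwards with x
    have e1 : |x j * Q x| = |x j| * Q x := by
      rw [abs_mul, abs_of_nonneg (hQ0 x)]
    have e2 : |x i * x j * (Q x * gKer d σ x c)| = |x i| * |x j| * (Q x * gKer d σ x c) := by
      rw [abs_mul, abs_mul, abs_of_nonneg (mul_nonneg (hQ0 x) (gKer_nonneg hσ x c))]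
    rw [e1, e2]
    ring
  -- integrable pieces for splitting
  have hInt0 : ∀ c : Fin d → ℝ, Integrable (fun x => Q x * gKer d σ x c) := by
    intro c
    apply (hintQ c).congr
    filter_upwards with x
    rw [abs_of_nonneg (hQ0 x)]
  have hInt2 : ∀ (c : Fin d → ℝ) (j : Fin d),
      Integrable (fun x => x j * Q x * gKer d σ x c) := by
    intro c j
    apply (hint_1 j c).mono'
    · exact ((continuous_apply j).aestronglyMeasurable.mul hQmeas).mul
        (continuous_gKer_x c).aestronglyMeasurable
    · filter_upwards with x
      rw [Real.norm_eq_abs, abs_mul, abs_of_nonneg (gKer_nonneg hσ x c)]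
  set A : Fin d → (Fin d → ℝ) → ℝ := fun j z => ∫ x, x j * Q x * gKer d σ x z with hAdef
  -- splitting integrals
  have hTj : ∀ (j : Fin d) (z : Fin d → ℝ),
      (∫ x, Q x * gKer d σ x z * (x j - z j)) = A j z - z j * J z := by
    intro j z
    have e1 : (fun x => Q x * gKer d σ x z * (x j - z j))
        = fun x => x j * Q x * gKer d σ x z - z j * (Q x * gKer d σ x z) := by
      funext x; ring
    rw [e1, integral_sub (hInt2 z j) ((hInt0 z).const_mul (z j)),
      MeasureTheory.integral_const_mul]
  have hSij : ∀ (i j : Fin d) (z : Fin d → ℝ),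
      (∫ x, x j * Q x * gKer d σ x z * (x i - z i))
        = (∫ x, x i * x j * (Q x * gKer d σ x z)) - z i * A j z := by
    intro i j z
    have e1 : (fun x => x j * Q x * gKer d σ x z * (x i - z i))
        = fun x => x i * x j * (Q x * gKer d σ x z) - z i * (x j * Q x * gKer d σ x z) := by
      funext x; ring
    rw [e1, integral_sub (hmomQ z i j) ((hInt2 z j).const_mul (z i)),
      MeasureTheory.integral_const_mul]
  -- rewrite the log function
  have hlog : (fun z => Real.log (jointD p σ (m + 1) (Function.update y (Fin.last m) z) / C))
      = fun z => Real.log (J z) - Real.log C := by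
    funext z
    rw [hupd z, Real.log_div (hJpos z).ne' hCpos.ne']
  -- inner derivative identification
  have hinner : ∀ jj : Fin d,
      (fun z => fderiv ℝ (fun z => Real.log (J z) - Real.log C) z (Pi.single jj 1))
        = fun z => (J z)⁻¹ * ((σ^2)⁻¹ * (A jj z - z jj * J z)) := by
    intro jj
    funext z
    have hJz := keyDeriv hσ Q hQmeas hintQ hintQ1 z
    have hg := (hJz.log (hJpos z).ne').sub_const (Real.log C)
    rw [hg.fderiv, ContinuousLinearMap.smul_apply, smul_eq_mul,
      keyDeriv_eval hσ Q hQmeas hintQ hintQ1 z jj, hTj jj z]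
  -- main computation
  ext i j
  simp only [hess', Matrix.of_apply]
  rw [hlog, hinner j]
  -- derivatives at z₀
  have hJ0 := keyDeriv hσ Q hQmeas hintQ hintQ1 z₀
  have hA0 := keyDeriv hσ (fun x => x j * Q x) (hmeas1 j) (hint_1 j) (hint1_1 j) z₀
  have hInv := (hasDerivAt_inv (hJpos z₀).ne').comp_hasFDerivAt z₀ hJ0
  have hproj : HasFDerivAt (fun z : Fin d → ℝ => z j)
      (ContinuousLinearMap.proj j : (Fin d → ℝ) →L[ℝ] ℝ) z₀ := hasFDerivAt_apply j z₀
  have hN := hA0.sub (hproj.mul hJ0)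
  have hB := hInv.mul (hN.const_mul ((σ^2)⁻¹))
  have hB' : HasFDerivAt (fun z => (J z)⁻¹ * ((σ^2)⁻¹ * (A j z - z j * J z)))
      ((J z₀)⁻¹ •
          ((σ^2)⁻¹ •
            ((∫ x, ((σ^2)⁻¹ * (x j * Q x * gKer d σ x z₀)) • lin fun i => x i - z₀ i) -
              ((z₀ j • ∫ x, ((σ^2)⁻¹ * (Q x * gKer d σ x z₀)) • lin fun i => x i - z₀ i) +
                (J z₀) • (ContinuousLinearMap.proj j : (Fin d → ℝ) →L[ℝ] ℝ)))) +
        ((σ^2)⁻¹ * (A j z₀ - z₀ j * J z₀)) •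
          (-(J z₀ ^ 2)⁻¹ •
            ∫ x, ((σ^2)⁻¹ * (Q x * gKer d σ x z₀)) • lin fun i => x i - z₀ i))
      z₀ := hB
  rw [hB'.fderiv]
  simp only [ContinuousLinearMap.add_apply, ContinuousLinearMap.coe_smul', Pi.smul_apply,
    ContinuousLinearMap.sub_apply, smul_eq_mul, ContinuousLinearMap.proj_apply]
  have e3 := keyDeriv_eval hσ Q hQmeas hintQ hintQ1 z₀ i
  have e4 := keyDeriv_eval hσ (fun x => x j * Q x) (hmeas1 j) (hint_1 j) (hint1_1 j) z₀ i
  rw [e3, e4, hTj i z₀, hSij i j z₀]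
  -- right hand side
  simp only [Matrix.add_apply, Matrix.neg_apply, Matrix.smul_apply, smul_eq_mul,
    Matrix.one_apply, postCovM, Matrix.of_apply]
  have hyQ : ∀ x, p x * ∏ k : Fin (m+1), gKer d σ x (y k) = Q x * gKer d σ x z₀ := by
    intro x
    rw [prod_self_eq, hQdef, mul_assoc]
  have hJy : jointD p σ (m+1) y = J z₀ := by
    unfold jointD
    simp only [hyQ]
    rfl
  rw [hJy]
  simp only [hyQ]
  have hAi : A i z₀ = ∫ x, x i * (Q x * gKer d σ x z₀) := by
    show (∫ x, x i * Q x * gKer d σ x z₀) = _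
    congr 1
    funext x
    ring
  have hAj : A j z₀ = ∫ x, x j * (Q x * gKer d σ x z₀) := by
    show (∫ x, x j * Q x * gKer d σ x z₀) = _
    congr 1
    funext x
    ring
  rw [← hAi, ← hAj]
  rw [Pi.single_apply]
  -- now pure algebra
  set Jv := J z₀
  set Ti := A i z₀
  set Tj := A j z₀
  set Sv := ∫ x, x i * x j * (Q x * gKer d σ x z₀)
  have hJvne : Jv ≠ 0 := (hJpos z₀).ne'
  by_cases hij : i = j
  · subst hij
    simp only [if_pos rfl]
    field_simp
    ring
  · rw [if_neg hij, if_neg (fun h => hij h.symm)]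
    field_simp
    ring

end
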